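/- arXiv:2202.10054 — 2 statements merged into one kernel-verified Lean document; each statement's English description precedes it below -/
import Mathlib

section
/- Let B* ∈ ℝ^{k×d} have orthonormal rows, let v* ∈ ℝ^k, let X ∈ ℝ^{n×d}, and let S ⊆ ℝ^d be the span of the rows of X with k ≤ dim S. If cangle(rowspace(B*), S) > 0, then v* is the unique global minimizer of the linear-probing loss v ↦ ‖X B*ᵀ v − X B*ᵀ v*‖₂² over v ∈ ℝ^k; in particular, the linear-probing solution v satisfies B*ᵀ v = B*ᵀ v*. -/
open Matrix

noncomputable section

/-- View a plain vector as an element of Euclidean space. -/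
def toE {n : ℕ} (x : Fin n → ℝ) : EuclideanSpace ℝ (Fin n) := WithLp.toLp 2 x

/-- Euclidean (ℓ2) norm of a vector. -/
def enorm2 {n : ℕ} (x : Fin n → ℝ) : ℝ := ‖toE x‖

/-- Row space of a matrix, as a subspace of Euclidean space. -/
def rowspace {k d : ℕ} (B : Matrix (Fin k) (Fin d) ℝ) :
    Submodule ℝ (EuclideanSpace ℝ (Fin d)) :=
  Submodule.span ℝ (Set.range fun i => toE (B i))

/-- Cosine of the largest principal angle between subspaces `R` and `T` of `ℝ^d`. -/
def cangle {d : ℕ} (R T : Submodule ℝ (EuclideanSpace ℝ (Fin d))) : ℝ :=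
  sInf {c | ∃ r ∈ R, ‖r‖ = 1 ∧ c = ‖(T.orthogonalProjection r : EuclideanSpace ℝ (Fin d))‖}

set_option linter.unusedVariables false

lemma key {n d k : ℕ} (B : Matrix (Fin k) (Fin d) ℝ) (X : Matrix (Fin n) (Fin d) ℝ)
    (hc : 0 < cangle (rowspace B) (rowspace X)) (w : Fin k → ℝ)
    (h : X.mulVec (Bᵀ.mulVec w) = 0) : Bᵀ.mulVec w = 0 := by
  set y : EuclideanSpace ℝ (Fin d) := toE (Bᵀ.mulVec w) with hy
  have hmemB : y ∈ rowspace B := by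
    have : y = ∑ i, w i • toE (B i) := by
      ext j
      rw [WithLp.ofLp_sum, Finset.sum_apply]
      simp [hy, toE, Matrix.mulVec, dotProduct, Matrix.transpose, mul_comm]
    rw [this]
    exact Submodule.sum_mem _ fun i _ =>
      Submodule.smul_mem _ _ (Submodule.subset_span ⟨i, rfl⟩)
  have hortho : y ∈ (rowspace X)ᗮ := by
    rw [Submodule.mem_orthogonal]
    intro u hu
    induction hu using Submodule.span_induction with
    | mem u hu =>
      obtain ⟨i, rfl⟩ := hu
      have := congrFun h i
      simpa [toE, Matrix.mulVec, dotProduct, PiLp.inner_apply, RCLike.inner_apply,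
        hy, mul_comm] using this
    | zero => simp
    | add u v _ _ h1 h2 => rw [inner_add_left, h1, h2, add_zero]
    | smul c u _ h1 => rw [inner_smul_left, h1, mul_zero]
  by_contra hne
  have hyne : y ≠ 0 := fun h0 => hne (by simpa [hy, toE] using h0)
  set r : EuclideanSpace ℝ (Fin d) := ‖y‖⁻¹ • y with hr
  have hrmem : r ∈ rowspace B := Submodule.smul_mem _ _ hmemB
  have hrortho : r ∈ (rowspace X)ᗮ := Submodule.smul_mem _ _ hortho
  have hrnorm : ‖r‖ = 1 := by
    rw [hr, norm_smul, norm_inv, norm_norm, inv_mul_cancel₀ (norm_ne_zero_iff.mpr hyne)]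
  have hproj : (rowspace X).orthogonalProjection r = 0 :=
    Submodule.orthogonalProjectionOnto_apply_of_mem_orthogonal hrortho
  have h0mem : (0 : ℝ) ∈ {c | ∃ r ∈ rowspace B, ‖r‖ = 1 ∧
      c = ‖((rowspace X).orthogonalProjection r : EuclideanSpace ℝ (Fin d))‖} :=
    ⟨r, hrmem, hrnorm, by rw [hproj]; simp⟩
  have hbdd : BddBelow {c | ∃ r ∈ rowspace B, ‖r‖ = 1 ∧
      c = ‖((rowspace X).orthogonalProjection r : EuclideanSpace ℝ (Fin d))‖} := by
    refine ⟨0, fun c hc => ?_⟩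
    obtain ⟨r, _, _, rfl⟩ := hc
    positivity
  have := csInf_le hbdd h0mem
  rw [← cangle] at this
  linarith

/-- if `cangle(rowspace B*, S) > 0` where `S` is the span of the training
data and `k ≤ dim S`, then `v*` is the unique global minimizer of the linear-probing loss
`v ↦ ‖X B*ᵀ v − X B*ᵀ v*‖₂²`; in particular every minimizer `v` has `B*ᵀ v = B*ᵀ v*`. -/
theorem stmt_15 {n d k : ℕ} (Bstar : Matrix (Fin k) (Fin d) ℝ) (hBs : Bstar * Bstarᵀ = 1)
    (vstar : Fin k → ℝ) (X : Matrix (Fin n) (Fin d) ℝ)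
    (hdim : k ≤ Module.finrank ℝ (rowspace X))
    (hc : 0 < cangle (rowspace Bstar) (rowspace X)) :
    (∀ v : Fin k → ℝ, v ≠ vstar →
      enorm2 (X.mulVec (Bstarᵀ.mulVec vstar) - X.mulVec (Bstarᵀ.mulVec vstar)) ^ 2 <
        enorm2 (X.mulVec (Bstarᵀ.mulVec v) - X.mulVec (Bstarᵀ.mulVec vstar)) ^ 2) ∧
    (∀ v : Fin k → ℝ,
      (∀ u : Fin k → ℝ,
        enorm2 (X.mulVec (Bstarᵀ.mulVec v) - X.mulVec (Bstarᵀ.mulVec vstar)) ^ 2 ≤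
          enorm2 (X.mulVec (Bstarᵀ.mulVec u) - X.mulVec (Bstarᵀ.mulVec vstar)) ^ 2) →
      Bstarᵀ.mulVec v = Bstarᵀ.mulVec vstar) := by
  have keydiff : ∀ v : Fin k → ℝ,
      X.mulVec (Bstarᵀ.mulVec v) = X.mulVec (Bstarᵀ.mulVec vstar) → v = vstar := by
    intro v hv
    have hz : X.mulVec (Bstarᵀ.mulVec (v - vstar)) = 0 := by
      rw [Matrix.mulVec_sub, Matrix.mulVec_sub, hv, sub_self]
    have hB0 := key Bstar X hc (v - vstar) hz
    have : (v - vstar) = 0 := by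
      have h1 : Bstar.mulVec (Bstarᵀ.mulVec (v - vstar)) = 0 := by
        rw [hB0, Matrix.mulVec_zero]
      rwa [Matrix.mulVec_mulVec, hBs, Matrix.one_mulVec] at h1
    exact sub_eq_zero.mp this
  constructor
  · intro v hv
    rw [sub_self]
    have h0 : enorm2 (0 : Fin n → ℝ) = 0 := by
      simp [enorm2, toE]
    rw [h0]
    have hne : X.mulVec (Bstarᵀ.mulVec v) - X.mulVec (Bstarᵀ.mulVec vstar) ≠ 0 := by
      intro h0'
      exact hv (keydiff v (sub_eq_zero.mp h0'))
    have : enorm2 (X.mulVec (Bstarᵀ.mulVec v) - X.mulVec (Bstarᵀ.mulVec vstar)) ≠ 0 := by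
      simp only [enorm2, norm_ne_zero_iff]
      exact fun h => hne (by simpa [toE] using congrArg WithLp.ofLp h)
    have hpos : 0 < enorm2 (X.mulVec (Bstarᵀ.mulVec v) - X.mulVec (Bstarᵀ.mulVec vstar)) :=
      lt_of_le_of_ne (norm_nonneg _) (Ne.symm this)
    calc (0:ℝ) ^ 2 = 0 := by norm_num
      _ < _ := pow_pos hpos 2
  · intro v hv
    have h := hv vstar
    rw [sub_self] at h
    have h0 : enorm2 (0 : Fin n → ℝ) = 0 := by simp [enorm2, toE]
    rw [h0] at h
    have hnn : 0 ≤ enorm2 (X.mulVec (Bstarᵀ.mulVec v) - X.mulVec (Bstarᵀ.mulVec vstar)) :=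
      norm_nonneg _
    have heq0 : enorm2 (X.mulVec (Bstarᵀ.mulVec v) - X.mulVec (Bstarᵀ.mulVec vstar)) = 0 := by
      nlinarith
    have : X.mulVec (Bstarᵀ.mulVec v) - X.mulVec (Bstarᵀ.mulVec vstar) = 0 := by
      have := norm_eq_zero.mp heq0
      simpa [toE] using congrArg WithLp.ofLp this
    have := keydiff v (sub_eq_zero.mp this)
    rw [this]

end
end

section
/- Let B ∈ ℝ^{k×d}, let w* ∈ ℝ^d, and let S ⊆ ℝ^d be a subspace with dim S = m > k. Let R_init = rowspace(B) with dim R_init ≤ k, and let R_aug = Span({w*} ∪ R_init). Suppose w* ∉ R_init and cangle(R_aug, S) > 0. Then for every v ∈ ℝ^k there exists x ∈ S with ⟨Bᵀ v, x⟩ ≠ ⟨w*, x⟩; i.e., no linear head v makes the linear probe vᵀ B x agree with the ground-truth predictor w*ᵀ x on all of S. -/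
open Matrix

noncomputable section

/-- if `w* ∉ rowspace(B)` and `cangle(Span({w*} ∪ rowspace B), S) > 0` where
`dim S = m > k`, then no linear head `v` makes the linear probe agree with the ground
truth `w*` on all of `S`. -/
theorem stmt_19 {k d m : ℕ} (B : Matrix (Fin k) (Fin d) ℝ) (wstar : Fin d → ℝ)
    (S : Submodule ℝ (EuclideanSpace ℝ (Fin d)))
    (hS : Module.finrank ℝ S = m) (hmk : k < m)
    (hw : toE wstar ∉ rowspace B)
    (hc : 0 < cangle (Submodule.span ℝ {toE wstar} ⊔ rowspace B) S) :
    ∀ v : Fin k → ℝ, ∃ x ∈ S,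
      inner ℝ (toE (Bᵀ.mulVec v)) x ≠ (inner ℝ (toE wstar) x : ℝ) := by
  intro v
  by_contra hcon
  push_neg at hcon
  -- Bᵀ v lies in the rowspace
  have hBv : toE (Bᵀ.mulVec v) ∈ rowspace B := by
    have : toE (Bᵀ.mulVec v) = ∑ i, v i • toE (B i) := by
      ext j
      rw [WithLp.ofLp_sum, Finset.sum_apply]
      simp [toE, Matrix.mulVec, dotProduct, mul_comm]
    rw [this]
    exact Submodule.sum_mem _ fun i _ =>
      Submodule.smul_mem _ _ (Submodule.subset_span ⟨i, rfl⟩)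
  set r : EuclideanSpace ℝ (Fin d) := toE wstar - toE (Bᵀ.mulVec v) with hr
  have hrne : r ≠ 0 := by
    intro h0
    apply hw
    have : toE wstar = toE (Bᵀ.mulVec v) := by
      have := sub_eq_zero.mp h0
      exact this
    rw [this]; exact hBv
  -- r is orthogonal to S
  have hperp : r ∈ Sᗮ := by
    intro x hx
    have := hcon x hx
    rw [hr, inner_sub_right, real_inner_comm (toE wstar) x,
      real_inner_comm (toE (Bᵀ.mulVec v)) x, this, sub_self]
  have hproj : S.orthogonalProjection r = 0 :=
    Submodule.orthogonalProjectionOnto_apply_of_mem_orthogonal hperp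
  -- r belongs to the augmented span
  have hraug : r ∈ Submodule.span ℝ {toE wstar} ⊔ rowspace B := by
    apply Submodule.sub_mem
    · exact Submodule.mem_sup_left (Submodule.mem_span_singleton_self _)
    · exact Submodule.mem_sup_right hBv
  -- unit vector
  set u : EuclideanSpace ℝ (Fin d) := ‖r‖⁻¹ • r with hu
  have hun : ‖u‖ = 1 := by
    rw [hu, norm_smul, norm_inv, norm_norm]
    field_simp [norm_ne_zero_iff.mpr hrne]
  have huaug : u ∈ Submodule.span ℝ {toE wstar} ⊔ rowspace B :=
    Submodule.smul_mem _ _ hraug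
  have huproj : ‖(S.orthogonalProjection u : EuclideanSpace ℝ (Fin d))‖ = 0 := by
    rw [hu, _root_.map_smul, hproj]
    simp
  have hmem : (0 : ℝ) ∈ {c | ∃ x ∈ Submodule.span ℝ {toE wstar} ⊔ rowspace B,
      ‖x‖ = 1 ∧ c = ‖(S.orthogonalProjection x : EuclideanSpace ℝ (Fin d))‖} :=
    ⟨u, huaug, hun, huproj.symm⟩
  have hbdd : BddBelow {c | ∃ x ∈ Submodule.span ℝ {toE wstar} ⊔ rowspace B,
      ‖x‖ = 1 ∧ c = ‖(S.orthogonalProjection x : EuclideanSpace ℝ (Fin d))‖} := by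
    refine ⟨0, ?_⟩
    rintro c ⟨x, -, -, rfl⟩
    exact norm_nonneg _
  have : cangle (Submodule.span ℝ {toE wstar} ⊔ rowspace B) S ≤ 0 :=
    csInf_le hbdd hmem
  linarith

end
end
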